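/- Assume the Verblunsky coefficients satisfy the decay hypothesis (1.5). Then there exist Δ_1 ∈ (0,1), functions s_n analytic on the annulus 𝔸 = {z : bΔ_1 < |z| < 1} with sup_{z ∈ K} |s_n(z)| → 0 faster than (bΔ_1)^n on compact K ⊂ 𝔸 (namely |s_n(z)| ≤ C (bΔ_1)^n (|z| − bΔ_1)^{-1}, where s_n(z) = Σ_{j=0}^∞ z^{-j-1} R_{n+j}(z) with R_n(z) = conj(α_n)Φ_n*(z) − S(z) Σ_ℓ conj(C_ℓ) conj(b_ℓ)^n), and a function f analytic on 𝔸 ∖ {conj(b_1), …, conj(b_L)} with f(z) = conj(S(1/conj(z))) whenever b < |z| < 1, such that for all n ≥ 0 and all z ∈ 𝔸 ∖ {conj(b_1), …, conj(b_L)}: Φ_n(z) = s_n(z) + S(z) Σ_{ℓ=1}^L conj(C_ℓ) conj(b_ℓ)^n (z − conj(b_ℓ))^{-1} + z^n f(z). -/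

import Mathlib

open Polynomial Filter Topology

/-- The monic orthogonal polynomials on the unit circle, defined by the Szegő
recursion `Φ₀ = 1`, `Φ_{n+1}(z) = z Φ_n(z) - conj(α_n) Φ_n^*(z)`, where the reversed
polynomial is `P^*(z) = Σ_{j=0}^n conj(c_{n-j}) z^j`. -/
noncomputable def PhiP (α : ℕ → ℂ) : ℕ → Polynomial ℂ
  | 0 => 1
  | n + 1 => X * PhiP α n -
      Polynomial.C ((starRingEnd ℂ) (α n)) *
        Polynomial.reflect n (Polynomial.map (starRingEnd ℂ) (PhiP α n))

/-- The reversed polynomial `Φ_n^*(z) = z^n conj(Φ_n(1/conj z))`. -/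
noncomputable def PhiStarP (α : ℕ → ℂ) (n : ℕ) : Polynomial ℂ :=
  Polynomial.reflect n (Polynomial.map (starRingEnd ℂ) (PhiP α n))

/-- `R_n(z) = conj(α_n) Φ_n^*(z) - S(z) Σ_ℓ conj(C_ℓ) conj(b_ℓ)^n`. -/
noncomputable def Rfun (α : ℕ → ℂ) (S : ℂ → ℂ) {L : ℕ} (Cs bs : Fin L → ℂ)
    (n : ℕ) (z : ℂ) : ℂ :=
  (starRingEnd ℂ) (α n) * (PhiStarP α n).eval z -
    S z * ∑ ℓ : Fin L, (starRingEnd ℂ) (Cs ℓ) * ((starRingEnd ℂ) (bs ℓ)) ^ n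

/-- `s_n(z) = Σ_{j=0}^∞ z^{-j-1} R_{n+j}(z)`. -/
noncomputable def sfun (α : ℕ → ℂ) (S : ℂ → ℂ) {L : ℕ} (Cs bs : Fin L → ℂ)
    (n : ℕ) (z : ℂ) : ℂ :=
  ∑' j : ℕ, (z ^ (j + 1))⁻¹ * Rfun α S Cs bs (n + j) z


lemma natDegree_reflect_le {P : Polynomial ℂ} {n : ℕ} (h : P.natDegree ≤ n) :
    (reflect n P).natDegree ≤ n := by
  refine natDegree_le_iff_coeff_eq_zero.2 fun i hi => ?_
  rw [coeff_reflect]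
  have hrev : revAt n i = i := by
    simp only [revAt]
    show (if i ≤ n then n - i else i) = i
    exact if_neg (by omega)
  rw [hrev]
  exact coeff_eq_zero_of_natDegree_lt (lt_of_le_of_lt h hi)

lemma phiP_natDegree (α : ℕ → ℂ) (n : ℕ) : (PhiP α n).natDegree ≤ n := by
  induction n with
  | zero => simp [PhiP]
  | succ n ih =>
    rw [PhiP]
    refine (natDegree_sub_le _ _).trans (max_le ?_ ?_)
    · calc (X * PhiP α n).natDegree ≤ 1 + (PhiP α n).natDegree := natDegree_mul_le.trans (by simp)
      _ ≤ 1 + n := by omega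
      _ = n + 1 := by omega
    · refine (natDegree_C_mul_le _ _).trans ?_
      refine le_trans (natDegree_reflect_le ?_) (by omega)
      simpa using ih

lemma reflect_reflect (N : ℕ) (f : Polynomial ℂ) : reflect N (reflect N f) = f := by
  ext i; simp [coeff_reflect, revAt_invol]

lemma map_conj_conj (P : Polynomial ℂ) :
    Polynomial.map (starRingEnd ℂ) (Polynomial.map (starRingEnd ℂ) P) = P := by
  ext i; simp

lemma phiStar_succ (α : ℕ → ℂ) (n : ℕ) :
    PhiStarP α (n + 1) = PhiStarP α n - Polynomial.C (α n) * (X * PhiP α n) := by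
  have hdeg : (PhiP α n).natDegree ≤ n := phiP_natDegree α n
  have hdegc : ((PhiP α n).map (starRingEnd ℂ)).natDegree ≤ n := by simpa using hdeg
  have hXmul : ∀ (Q : Polynomial ℂ), Q.natDegree ≤ n → reflect (n+1) (X * Q) = reflect n Q := by
    intro Q hQ
    have := reflect_mul (X : Polynomial ℂ) Q (natDegree_X_le) hQ
    rw [add_comm] at this
    rw [this, reflect_one_X, one_mul]
  rw [PhiStarP, PhiP]
  rw [sub_eq_add_neg, Polynomial.map_add, Polynomial.map_neg, Polynomial.map_mul,
    Polynomial.map_mul, map_C, reflect_add, reflect_neg]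
  rw [Polynomial.map_X]
  rw [hXmul _ hdegc]
  have h2 : Polynomial.map (starRingEnd ℂ)
      (reflect n (Polynomial.map (starRingEnd ℂ) (PhiP α n))) = reflect n (PhiP α n) := by
    rw [← reflect_map, map_conj_conj]
  rw [h2]
  have h3 : reflect (n+1) (C ((starRingEnd ℂ) ((starRingEnd ℂ) (α n))) * reflect n (PhiP α n))
      = C (α n) * (X * PhiP α n) := by
    rw [reflect_C_mul]
    have : reflect n (PhiP α n) = reflect (n+1) (X * PhiP α n) := (hXmul _ hdeg).symm
    rw [this, reflect_reflect]
    simp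
  rw [h3, PhiStarP]
  ring

lemma eval_reflect {P : Polynomial ℂ} {n : ℕ} (h : P.natDegree ≤ n) {z : ℂ} (hz : z ≠ 0) :
    (reflect n P).eval z = z ^ n * P.eval z⁻¹ := by
  have : Invertible (z⁻¹) := invertibleOfNonzero (inv_ne_zero hz)
  have h2 := eval₂_reflect_mul_pow (RingHom.id ℂ) (z⁻¹) n P h
  rw [invOf_eq_inv, inv_inv] at h2
  have h3 : (reflect n P).eval z * (z⁻¹) ^ n = P.eval z⁻¹ := h2
  rw [← h3]
  rw [mul_left_comm, ← mul_pow, mul_inv_cancel₀ hz, one_pow, mul_one]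

lemma geom_rearrange (c q r : ℝ) (hr : r ≠ 0) (n j : ℕ) :
    (r ^ (j+1))⁻¹ * (c * q ^ (n+j)) = (c * q ^ n / r) * (q / r) ^ j := by
  rw [pow_add, pow_succ, div_pow]
  field_simp
  ring

lemma geom_rearrange2 (c q r : ℝ) (hr : r ≠ 0) (N : ℕ) :
    (r ^ N)⁻¹ * (c * q ^ N) = c * (q / r) ^ N := by
  rw [div_pow]
  field_simp

lemma inv_one_sub_div (x y : ℝ) (hx : x ≠ 0) (hxy : x - y ≠ 0) :
    (1 - y / x)⁻¹ = x * (x - y)⁻¹ := by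
  rw [show (1 : ℝ) - y / x = (x - y) / x by field_simp, inv_div, div_eq_mul_inv]

lemma div_mul_mul_inv_cancel (a x w : ℝ) (hx : x ≠ 0) : a / x * (x * w) = a * w := by
  field_simp

set_option maxHeartbeats 2000000 in
theorem stmt_13 (α : ℕ → ℂ) (hα : ∀ n, norm (α n) < 1)
    (L : ℕ) (hL : 1 ≤ L) (b Δ A : ℝ) (bs Cs : Fin L → ℂ)
    (hb0 : 0 < b) (hb1 : b < 1) (hinj : Function.Injective bs)
    (habs : ∀ ℓ, norm (bs ℓ) = b) (hCs : ∀ ℓ, Cs ℓ ≠ 0)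
    (hΔ0 : 0 < Δ) (hΔ1 : Δ < 1) (hA : 0 < A)
    (hdecay : ∀ n : ℕ,
      norm (α n - ∑ ℓ : Fin L, Cs ℓ * bs ℓ ^ n) ≤ A * (b * Δ) ^ n)
    (S : ℂ → ℂ)
    (hS : ∀ z : ℂ, norm z < 1 / b →
      Tendsto (fun n : ℕ => (PhiStarP α n).eval z) atTop (nhds (S z)))
 :
    ∃ Δ₁ : ℝ, 0 < Δ₁ ∧ Δ₁ < 1 ∧ ∃ C : ℝ, 0 < C ∧ ∃ f : ℂ → ℂ,
      (∀ n : ℕ, ∀ z : ℂ, b * Δ₁ < norm z → norm z < 1 →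
        norm (sfun α S Cs bs n z) ≤
          C * (b * Δ₁) ^ n * (norm z - b * Δ₁)⁻¹) ∧
      (∀ n : ℕ, AnalyticOnNhd ℂ (sfun α S Cs bs n)
        {z : ℂ | b * Δ₁ < norm z ∧ norm z < 1}) ∧
      AnalyticOnNhd ℂ f
        {z : ℂ | (b * Δ₁ < norm z ∧ norm z < 1) ∧
          ∀ ℓ : Fin L, z ≠ (starRingEnd ℂ) (bs ℓ)} ∧
      (∀ z : ℂ, b < norm z → norm z < 1 →
        f z = (starRingEnd ℂ) (S (((starRingEnd ℂ) z)⁻¹))) ∧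
      (∀ n : ℕ, ∀ z : ℂ, b * Δ₁ < norm z → norm z < 1 →
        (∀ ℓ : Fin L, z ≠ (starRingEnd ℂ) (bs ℓ)) →
        (PhiP α n).eval z = sfun α S Cs bs n z +
          S z * (∑ ℓ : Fin L, (starRingEnd ℂ) (Cs ℓ) * ((starRingEnd ℂ) (bs ℓ)) ^ n *
            (z - (starRingEnd ℂ) (bs ℓ))⁻¹) + z ^ n * f z) := by

  -- basic constants
  have hb01 : (0:ℝ) < 1 - b := by linarith
  set C' : ℝ := (∑ ℓ : Fin L, norm (Cs ℓ)) + A with hC'def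
  have hCsum_nonneg : 0 ≤ ∑ ℓ : Fin L, norm (Cs ℓ) :=
    Finset.sum_nonneg fun ℓ _ => norm_nonneg _
  have hC' : 0 < C' := by positivity
  have hαb : ∀ n, norm (α n) ≤ C' * b ^ n := by
    intro n
    have h1 := hdecay n
    have h2 : norm (∑ ℓ : Fin L, Cs ℓ * bs ℓ ^ n)
        ≤ (∑ ℓ : Fin L, norm (Cs ℓ)) * b ^ n := by
      refine (norm_sum_le _ _).trans ?_
      rw [Finset.sum_mul]
      refine Finset.sum_le_sum fun ℓ _ => ?_
      rw [norm_mul, norm_pow, habs]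
    have h3 : A * (b * Δ) ^ n ≤ A * b ^ n := by
      have : (b * Δ) ^ n ≤ b ^ n := by
        refine pow_le_pow_left₀ (by positivity) ?_ n
        nlinarith
      nlinarith
    calc norm (α n)
        = norm ((α n - ∑ ℓ : Fin L, Cs ℓ * bs ℓ ^ n) + ∑ ℓ : Fin L, Cs ℓ * bs ℓ ^ n) := by
          rw [sub_add_cancel]
      _ ≤ norm (α n - ∑ ℓ : Fin L, Cs ℓ * bs ℓ ^ n)
            + norm (∑ ℓ : Fin L, Cs ℓ * bs ℓ ^ n) := norm_add_le _ _
      _ ≤ A * (b * Δ) ^ n + (∑ ℓ : Fin L, norm (Cs ℓ)) * b ^ n := add_le_add h1 h2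
      _ ≤ A * b ^ n + (∑ ℓ : Fin L, norm (Cs ℓ)) * b ^ n := by linarith
      _ = C' * b ^ n := by rw [hC'def]; ring
  set M : ℝ := Real.exp (C' / (1 - b)) with hMdef
  have hM1 : (1:ℝ) ≤ M := Real.one_le_exp (by positivity)
  have hM0 : (0:ℝ) < M := lt_of_lt_of_le one_pos hM1
  have hgeom : ∀ n : ℕ, ∑ k ∈ Finset.range n, b ^ k ≤ 1 / (1 - b) := by
    intro n
    have h := (summable_geometric_of_lt_one hb0.le hb1).sum_le_tsum (Finset.range n) (fun k _ => by positivity)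
    rw [tsum_geometric_of_lt_one hb0.le hb1] at h
    rw [one_div]
    exact h
  -- uniform bound on Phi and PhiStar on the closed unit disk
  have hMb : ∀ n, ∀ z : ℂ, norm z ≤ 1 →
      norm ((PhiP α n).eval z) ≤ M ∧ norm ((PhiStarP α n).eval z) ≤ M := by
    have key : ∀ n, ∀ z : ℂ, norm z ≤ 1 →
        norm ((PhiP α n).eval z) ≤ ∏ k ∈ Finset.range n, (1 + norm (α k)) ∧
        norm ((PhiStarP α n).eval z) ≤ ∏ k ∈ Finset.range n, (1 + norm (α k)) := by
      intro n
      induction n with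
      | zero =>
        intro z hz
        constructor
        · simp [PhiP]
        · simp [PhiStarP, PhiP]
      | succ n ih =>
        intro z hz
        obtain ⟨ih1, ih2⟩ := ih z hz
        have hQnn : (0:ℝ) ≤ ∏ k ∈ Finset.range n, (1 + norm (α k)) :=
          Finset.prod_nonneg fun k _ => by positivity
        have hprod : ∏ k ∈ Finset.range (n+1), (1 + norm (α k))
            = (∏ k ∈ Finset.range n, (1 + norm (α k))) * (1 + norm (α n)) :=
          Finset.prod_range_succ _ _
        constructor
        · show norm ((PhiP α (n+1)).eval z) ≤ _
          rw [PhiP]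
          have : ((X * PhiP α n - Polynomial.C ((starRingEnd ℂ) (α n)) *
              Polynomial.reflect n (Polynomial.map (starRingEnd ℂ) (PhiP α n))).eval z)
              = z * (PhiP α n).eval z - (starRingEnd ℂ) (α n) * (PhiStarP α n).eval z := by
            simp [PhiStarP]
          rw [this, hprod]
          calc norm (z * (PhiP α n).eval z - (starRingEnd ℂ) (α n) * (PhiStarP α n).eval z)
              ≤ norm (z * (PhiP α n).eval z)
                + norm ((starRingEnd ℂ) (α n) * (PhiStarP α n).eval z) :=
                norm_sub_le _ _
            _ ≤ 1 * (∏ k ∈ Finset.range n, (1 + norm (α k)))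
                + norm (α n) * (∏ k ∈ Finset.range n, (1 + norm (α k))) := by
                rw [norm_mul, norm_mul, Complex.norm_conj]
                exact add_le_add (mul_le_mul hz ih1 (norm_nonneg _) one_pos.le)
                  (mul_le_mul le_rfl ih2 (norm_nonneg _) (norm_nonneg _))
            _ = (∏ k ∈ Finset.range n, (1 + norm (α k))) * (1 + norm (α n)) := by
                ring
        · rw [phiStar_succ, hprod]
          have : ((PhiStarP α n - Polynomial.C (α n) * (X * PhiP α n)).eval z)
              = (PhiStarP α n).eval z - α n * (z * (PhiP α n).eval z) := by simp
          rw [this]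
          calc norm ((PhiStarP α n).eval z - α n * (z * (PhiP α n).eval z))
              ≤ norm ((PhiStarP α n).eval z)
                + norm (α n * (z * (PhiP α n).eval z)) := norm_sub_le _ _
            _ ≤ (∏ k ∈ Finset.range n, (1 + norm (α k)))
                + norm (α n) * (1 * (∏ k ∈ Finset.range n, (1 + norm (α k)))) := by
                rw [norm_mul, norm_mul]
                refine add_le_add ih2 (mul_le_mul le_rfl ?_ (by positivity)
                  (norm_nonneg _))
                exact mul_le_mul hz ih1 (norm_nonneg _) one_pos.le
            _ ≤ (∏ k ∈ Finset.range n, (1 + norm (α k))) * (1 + norm (α n)) := by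
                nlinarith [norm_nonneg (α n)]
    intro n z hz
    have hQM : ∏ k ∈ Finset.range n, (1 + norm (α k)) ≤ M := by
      calc ∏ k ∈ Finset.range n, (1 + norm (α k))
          ≤ ∏ k ∈ Finset.range n, Real.exp (norm (α k)) := by
            refine Finset.prod_le_prod (fun k _ => by positivity) fun k _ => ?_
            have := Real.add_one_le_exp (norm (α k))
            linarith
        _ = Real.exp (∑ k ∈ Finset.range n, norm (α k)) := by
            rw [Real.exp_sum]
        _ ≤ M := by
            rw [hMdef]
            refine Real.exp_le_exp.2 ?_
            calc ∑ k ∈ Finset.range n, norm (α k)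
                ≤ ∑ k ∈ Finset.range n, C' * b ^ k := Finset.sum_le_sum fun k _ => hαb k
              _ = C' * ∑ k ∈ Finset.range n, b ^ k := by rw [Finset.mul_sum]
              _ ≤ C' * (1 / (1 - b)) := by
                  refine mul_le_mul le_rfl (hgeom n) ?_ hC'.le
                  exact Finset.sum_nonneg fun k _ => by positivity
              _ = C' / (1 - b) := by ring
    obtain ⟨h1, h2⟩ := key n z hz
    exact ⟨h1.trans hQM, h2.trans hQM⟩

  -- convergence rate of PhiStar to S
  set D : ℝ := M * C' / (1 - b) with hDdef
  have hD0 : 0 < D := by positivity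
  have hb1' : (1:ℝ) < 1 / b := by rw [lt_div_iff₀ hb0]; linarith
  have hstep : ∀ k, ∀ z : ℂ, norm z ≤ 1 →
      norm ((PhiStarP α (k+1)).eval z - (PhiStarP α k).eval z) ≤ M * C' * b ^ k := by
    intro k z hz
    have h1 : (PhiStarP α (k+1)).eval z - (PhiStarP α k).eval z
        = -(α k * (z * (PhiP α k).eval z)) := by
      rw [phiStar_succ]; simp
    rw [h1, norm_neg, norm_mul, norm_mul]
    calc norm (α k) * (norm z * norm ((PhiP α k).eval z))
        ≤ (C' * b ^ k) * (1 * M) := by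
          refine mul_le_mul (hαb k) ?_ (by positivity) (by positivity)
          exact mul_le_mul hz (hMb k z hz).1 (norm_nonneg _) one_pos.le
      _ = M * C' * b ^ k := by ring
  have hSd : ∀ N, ∀ z : ℂ, norm z ≤ 1 →
      norm ((PhiStarP α N).eval z - S z) ≤ D * b ^ N := by
    intro N z hz
    have hcau : ∀ N' : ℕ, N ≤ N' →
        dist ((PhiStarP α N).eval z) ((PhiStarP α N').eval z) ≤ D * b ^ N := by
      intro N' hNN'
      have h1 := dist_le_Ico_sum_of_dist_le (f := fun k => (PhiStarP α k).eval z) hNN'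
        (d := fun k => M * C' * b ^ k)
        (fun {k} _ _ => by
          simp only [Complex.dist_eq]
          rw [← norm_neg]
          simpa [neg_sub] using hstep k z hz)
      refine h1.trans ?_
      rw [Finset.sum_Ico_eq_sum_range]
      calc ∑ i ∈ Finset.range (N' - N), M * C' * b ^ (N + i)
          = (M * C' * b ^ N) * ∑ i ∈ Finset.range (N' - N), b ^ i := by
            rw [Finset.mul_sum]; congr 1; ext i; rw [pow_add]; ring
        _ ≤ (M * C' * b ^ N) * (1 / (1 - b)) := by
            refine mul_le_mul le_rfl (hgeom _) ?_ (by positivity)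
            exact Finset.sum_nonneg fun k _ => by positivity
        _ = D * b ^ N := by rw [hDdef]; ring
    have htt : Tendsto (fun N' : ℕ => dist ((PhiStarP α N).eval z) ((PhiStarP α N').eval z))
        atTop (nhds (dist ((PhiStarP α N).eval z) (S z))) :=
      tendsto_const_nhds.dist (hS z (lt_of_le_of_lt hz hb1'))
    have := le_of_tendsto htt (eventually_atTop.2 ⟨N, hcau⟩)
    rwa [Complex.dist_eq] at this
  -- S is analytic on the unit disk
  have hdisk_open : IsOpen {z : ℂ | norm z < 1} :=
    isOpen_lt continuous_norm continuous_const
  have hSanal : AnalyticOnNhd ℂ S {z : ℂ | norm z < 1} := by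
    have hTU : TendstoUniformlyOn (fun N (z : ℂ) => (PhiStarP α N).eval z) S atTop
        {z : ℂ | norm z < 1} := by
      rw [Metric.tendstoUniformlyOn_iff]
      intro ε hε
      have h0 : Tendsto (fun N : ℕ => D * b ^ N) atTop (nhds 0) := by
        simpa using (tendsto_pow_atTop_nhds_zero_of_lt_one hb0.le hb1).const_mul D
      filter_upwards [(h0.eventually (gt_mem_nhds hε))] with N hN z hz
      rw [dist_comm, Complex.dist_eq]
      exact lt_of_le_of_lt (hSd N z (le_of_lt hz)) hN
    have hdiff : DifferentiableOn ℂ S {z : ℂ | norm z < 1} := by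
      refine hTU.tendstoLocallyUniformlyOn.differentiableOn ?_ hdisk_open
      exact Filter.Eventually.of_forall fun N =>
        (Polynomial.differentiable _).differentiableOn
    exact hdiff.analyticOnNhd hdisk_open
  -- choice of Δ₁ and the R bound
  set Δ₁ : ℝ := max b Δ with hΔ₁def
  have hΔ₁0 : 0 < Δ₁ := lt_of_lt_of_le hb0 (le_max_left _ _)
  have hΔ₁1 : Δ₁ < 1 := max_lt hb1 hΔ1
  have hbΔ₁0 : 0 < b * Δ₁ := by positivity
  have hbb : b * b ≤ b * Δ₁ := by
    refine mul_le_mul le_rfl (le_max_left _ _) hb0.le hb0.le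
  have hbΔle : b * Δ ≤ b * Δ₁ := by
    refine mul_le_mul le_rfl (le_max_right _ _) hΔ0.le hb0.le
  set K : ℝ := (∑ ℓ : Fin L, norm (Cs ℓ)) * D + A * M with hKdef
  have hK0 : 0 < K := by positivity
  have hR : ∀ n, ∀ z : ℂ, norm z ≤ 1 →
      norm (Rfun α S Cs bs n z) ≤ K * (b * Δ₁) ^ n := by
    intro n z hz
    set Sc : ℂ := ∑ ℓ : Fin L, (starRingEnd ℂ) (Cs ℓ) * ((starRingEnd ℂ) (bs ℓ)) ^ n with hScdef
    have hconj : (starRingEnd ℂ) (α n)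
        = Sc + (starRingEnd ℂ) (α n - ∑ ℓ : Fin L, Cs ℓ * bs ℓ ^ n) := by
      rw [map_sub, hScdef, map_sum]
      simp only [map_mul, map_pow]
      ring
    have hsplit : Rfun α S Cs bs n z
        = Sc * ((PhiStarP α n).eval z - S z)
          + (starRingEnd ℂ) (α n - ∑ ℓ : Fin L, Cs ℓ * bs ℓ ^ n) * (PhiStarP α n).eval z := by
      rw [Rfun, hconj]; ring
    have hSc : norm Sc ≤ (∑ ℓ : Fin L, norm (Cs ℓ)) * b ^ n := by
      rw [hScdef]
      refine (norm_sum_le _ _).trans ?_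
      rw [Finset.sum_mul]
      refine Finset.sum_le_sum fun ℓ _ => ?_
      rw [norm_mul, norm_pow, Complex.norm_conj, Complex.norm_conj, habs]
    have hbbn : b ^ n * b ^ n ≤ (b * Δ₁) ^ n := by
      rw [← mul_pow]
      exact pow_le_pow_left₀ (by positivity) hbb n
    have hbΔn : (b * Δ) ^ n ≤ (b * Δ₁) ^ n := pow_le_pow_left₀ (by positivity) hbΔle n
    rw [hsplit]
    calc norm (Sc * ((PhiStarP α n).eval z - S z)
          + (starRingEnd ℂ) (α n - ∑ ℓ : Fin L, Cs ℓ * bs ℓ ^ n) * (PhiStarP α n).eval z)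
        ≤ norm Sc * norm ((PhiStarP α n).eval z - S z)
          + norm (α n - ∑ ℓ : Fin L, Cs ℓ * bs ℓ ^ n)
            * norm ((PhiStarP α n).eval z) := by
          refine (norm_add_le _ _).trans ?_
          rw [norm_mul, norm_mul, Complex.norm_conj]
      _ ≤ ((∑ ℓ : Fin L, norm (Cs ℓ)) * b ^ n) * (D * b ^ n)
          + (A * (b * Δ) ^ n) * M := by
          refine add_le_add ?_ ?_
          · exact mul_le_mul hSc (hSd n z hz) (norm_nonneg _) (by positivity)
          · exact mul_le_mul (hdecay n) (hMb n z hz).2 (norm_nonneg _) (by positivity)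
      _ ≤ (∑ ℓ : Fin L, norm (Cs ℓ)) * D * (b * Δ₁) ^ n + A * M * (b * Δ₁) ^ n := by
          refine add_le_add ?_ ?_
          · calc (∑ ℓ : Fin L, norm (Cs ℓ)) * b ^ n * (D * b ^ n)
                = (∑ ℓ : Fin L, norm (Cs ℓ)) * D * (b ^ n * b ^ n) := by ring
              _ ≤ (∑ ℓ : Fin L, norm (Cs ℓ)) * D * (b * Δ₁) ^ n := by
                  refine mul_le_mul le_rfl hbbn (by positivity) (by positivity)
          · calc A * (b * Δ) ^ n * M = A * M * (b * Δ) ^ n := by ring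
              _ ≤ A * M * (b * Δ₁) ^ n := by
                  refine mul_le_mul le_rfl hbΔn (by positivity) (by positivity)
      _ = K * (b * Δ₁) ^ n := by rw [hKdef]; ring

  -- termwise bound for the series defining sfun
  have hterm : ∀ n, ∀ z : ℂ, b * Δ₁ < norm z → norm z ≤ 1 → ∀ j : ℕ,
      norm ((z ^ (j+1))⁻¹ * Rfun α S Cs bs (n+j) z)
        ≤ (K * (b * Δ₁) ^ n / norm z) * ((b * Δ₁) / norm z) ^ j := by
    intro n z h1 h2 j
    have haz0 : 0 < norm z := lt_trans hbΔ₁0 h1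
    have haz0' : norm z ≠ 0 := haz0.ne'
    calc norm ((z ^ (j+1))⁻¹ * Rfun α S Cs bs (n+j) z)
        = (norm z ^ (j+1))⁻¹ * norm (Rfun α S Cs bs (n+j) z) := by
          rw [norm_mul, norm_inv, norm_pow]
      _ ≤ (norm z ^ (j+1))⁻¹ * (K * (b * Δ₁) ^ (n+j)) := by
          refine mul_le_mul le_rfl (hR (n+j) z h2) (norm_nonneg _) (by positivity)
      _ = (K * (b * Δ₁) ^ n / norm z) * ((b * Δ₁) / norm z) ^ j :=
          geom_rearrange K (b * Δ₁) (norm z) haz0' n j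
  have hsum1 : ∀ n, ∀ z : ℂ, b * Δ₁ < norm z → norm z ≤ 1 →
      Summable (fun j : ℕ => (z ^ (j+1))⁻¹ * Rfun α S Cs bs (n+j) z) := by
    intro n z h1 h2
    have haz0 : 0 < norm z := lt_trans hbΔ₁0 h1
    have hr0 : 0 ≤ (b * Δ₁) / norm z := by positivity
    have hr1 : (b * Δ₁) / norm z < 1 := (div_lt_one haz0).2 h1
    refine Summable.of_norm (Summable.of_nonneg_of_le (fun j => norm_nonneg _) ?_
      ((summable_geometric_of_lt_one hr0 hr1).mul_left (K * (b * Δ₁) ^ n / norm z)))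
    intro j
    simpa using hterm n z h1 h2 j
  -- the sup bound on sfun (first bullet)
  have hsb : ∀ n, ∀ z : ℂ, b * Δ₁ < norm z → norm z ≤ 1 →
      norm (sfun α S Cs bs n z) ≤ K * (b * Δ₁) ^ n * (norm z - b * Δ₁)⁻¹ := by
    intro n z h1 h2
    have haz0 : 0 < norm z := lt_trans hbΔ₁0 h1
    have hr0 : 0 ≤ (b * Δ₁) / norm z := by positivity
    have hr1 : (b * Δ₁) / norm z < 1 := (div_lt_one haz0).2 h1
    have hgeo := (summable_geometric_of_lt_one hr0 hr1).mul_left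
      (K * (b * Δ₁) ^ n / norm z)
    have hnorm : Summable (fun j : ℕ => ‖(z ^ (j+1))⁻¹ * Rfun α S Cs bs (n+j) z‖) := by
      refine Summable.of_nonneg_of_le (fun j => norm_nonneg _) ?_ hgeo
      intro j
      simpa using hterm n z h1 h2 j
    calc norm (sfun α S Cs bs n z)
        ≤ ∑' j : ℕ, ‖(z ^ (j+1))⁻¹ * Rfun α S Cs bs (n+j) z‖ := by
          simpa [sfun] using norm_tsum_le_tsum_norm hnorm
      _ ≤ ∑' j : ℕ, (K * (b * Δ₁) ^ n / norm z) * ((b * Δ₁) / norm z) ^ j := by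
          refine hnorm.tsum_le_tsum ?_ hgeo
          intro j
          simpa using hterm n z h1 h2 j
      _ = (K * (b * Δ₁) ^ n / norm z) * (1 - (b * Δ₁) / norm z)⁻¹ := by
          rw [tsum_mul_left, tsum_geometric_of_lt_one hr0 hr1]
      _ = K * (b * Δ₁) ^ n * (norm z - b * Δ₁)⁻¹ := by
          have h3 : norm z - b * Δ₁ ≠ 0 := sub_ne_zero.2 h1.ne'
          rw [inv_one_sub_div _ _ haz0.ne' h3]
          exact div_mul_mul_inv_cancel _ _ _ haz0.ne' 
  -- analyticity of sfun on the annulus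
  have hsanal : ∀ n, AnalyticOnNhd ℂ (sfun α S Cs bs n)
      {z : ℂ | b * Δ₁ < norm z ∧ norm z < 1} := by
    intro n z₀ hz₀
    obtain ⟨h1, h2⟩ := hz₀
    set r₁ : ℝ := (b * Δ₁ + norm z₀) / 2 with hr₁def
    have hr₁0 : 0 < r₁ := by positivity
    have hbr₁ : b * Δ₁ < r₁ := by rw [hr₁def]; linarith
    have hr₁z : r₁ < norm z₀ := by rw [hr₁def]; linarith
    set U : Set ℂ := {z : ℂ | r₁ < norm z ∧ norm z < 1} with hUdef
    have hUopen : IsOpen U := by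
      rw [hUdef]
      exact (isOpen_lt continuous_const continuous_norm).inter
        (isOpen_lt continuous_norm continuous_const)
    have hz₀U : z₀ ∈ U := ⟨hr₁z, h2⟩
    have hrr0 : 0 ≤ (b * Δ₁) / r₁ := by positivity
    have hrr1 : (b * Δ₁) / r₁ < 1 := (div_lt_one hr₁0).2 hbr₁
    have hu : Summable (fun j : ℕ => (K * (b * Δ₁) ^ n / r₁) * ((b * Δ₁) / r₁) ^ j) :=
      (summable_geometric_of_lt_one hrr0 hrr1).mul_left _
    have hbound : ∀ (j : ℕ), ∀ z ∈ U,
        ‖(z ^ (j+1))⁻¹ * Rfun α S Cs bs (n+j) z‖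
          ≤ (K * (b * Δ₁) ^ n / r₁) * ((b * Δ₁) / r₁) ^ j := by
      intro j z hz
      obtain ⟨hz1, hz2⟩ := hz
      have haz0 : 0 < norm z := lt_trans hr₁0 hz1
      have hple : r₁ ^ (j+1) ≤ norm z ^ (j+1) := pow_le_pow_left₀ hr₁0.le hz1.le _
      calc ‖(z ^ (j+1))⁻¹ * Rfun α S Cs bs (n+j) z‖
          = (norm z ^ (j+1))⁻¹ * norm (Rfun α S Cs bs (n+j) z) := by
            rw [norm_mul, norm_inv, norm_pow]
        _ ≤ (r₁ ^ (j+1))⁻¹ * (K * (b * Δ₁) ^ (n+j)) := by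
            refine mul_le_mul ?_ (hR (n+j) z hz2.le) (norm_nonneg _) (by positivity)
            exact inv_anti₀ (by positivity) hple
        _ = (K * (b * Δ₁) ^ n / r₁) * ((b * Δ₁) / r₁) ^ j :=
            geom_rearrange K (b * Δ₁) r₁ hr₁0.ne' n j
    have hTU := tendstoUniformlyOn_tsum_nat hu hbound
    have hdiffU : DifferentiableOn ℂ (sfun α S Cs bs n) U := by
      have : DifferentiableOn ℂ
          (fun z : ℂ => ∑' j : ℕ, (z ^ (j+1))⁻¹ * Rfun α S Cs bs (n+j) z) U := by
        refine hTU.tendstoLocallyUniformlyOn.differentiableOn ?_ hUopen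
        refine Filter.Eventually.of_forall fun N => ?_
        refine DifferentiableOn.fun_sum fun j _ => ?_
        have hinv : DifferentiableOn ℂ (fun z : ℂ => (z ^ (j+1))⁻¹) U := by
          refine DifferentiableOn.inv ?_ ?_
          · exact (differentiable_pow _).differentiableOn
          · intro z hz
            have : (0:ℝ) < norm z := lt_trans hr₁0 hz.1
            exact pow_ne_zero _ (by simpa using this.ne')
        refine hinv.mul ?_
        have hUdisk : U ⊆ {z : ℂ | norm z < 1} := fun z hz => hz.2
        refine DifferentiableOn.sub ?_ ?_
        · exact (differentiableOn_const _).mul (Polynomial.differentiable _).differentiableOn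
        · exact ((hSanal.mono hUdisk).differentiableOn).mul (differentiableOn_const _)
      exact this
    exact (hdiffU.analyticOnNhd hUopen) z₀ hz₀U

  -- the shift recursion for sfun
  have hzs : ∀ n, ∀ z : ℂ, b * Δ₁ < norm z → norm z ≤ 1 →
      z * sfun α S Cs bs n z = Rfun α S Cs bs n z + sfun α S Cs bs (n+1) z := by
    intro n z h1 h2
    have haz0 : 0 < norm z := lt_trans hbΔ₁0 h1
    have hz0 : z ≠ 0 := by
      intro h; rw [h] at haz0; simp at haz0
    have hg : (fun j : ℕ => z * ((z ^ (j+1))⁻¹ * Rfun α S Cs bs (n+j) z))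
        = fun j : ℕ => (z ^ j)⁻¹ * Rfun α S Cs bs (n+j) z := by
      funext j
      have : z * (z ^ (j+1))⁻¹ = (z ^ j)⁻¹ := by
        rw [pow_succ, mul_inv]
        field_simp
      rw [← mul_assoc, this]
    have hsum' : Summable (fun j : ℕ => (z ^ j)⁻¹ * Rfun α S Cs bs (n+j) z) := by
      rw [← hg]
      exact (hsum1 n z h1 h2).mul_left z
    calc z * sfun α S Cs bs n z
        = ∑' j : ℕ, z * ((z ^ (j+1))⁻¹ * Rfun α S Cs bs (n+j) z) := by
          rw [sfun, tsum_mul_left]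
      _ = ∑' j : ℕ, (z ^ j)⁻¹ * Rfun α S Cs bs (n+j) z := by rw [hg]
      _ = (z ^ 0)⁻¹ * Rfun α S Cs bs (n+0) z
            + ∑' j : ℕ, (z ^ (j+1))⁻¹ * Rfun α S Cs bs (n+(j+1)) z := hsum'.tsum_eq_zero_add
      _ = Rfun α S Cs bs n z + sfun α S Cs bs (n+1) z := by
          rw [pow_zero, inv_one, one_mul, Nat.add_zero, sfun]
          congr 1
          apply tsum_congr
          intro j
          congr 2
          omega
  -- the rational part and the function f
  set T : ℕ → ℂ → ℂ := fun n z => ∑ ℓ : Fin L, (starRingEnd ℂ) (Cs ℓ)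
      * ((starRingEnd ℂ) (bs ℓ)) ^ n * (z - (starRingEnd ℂ) (bs ℓ))⁻¹ with hTdef
  set f : ℂ → ℂ := fun z => 1 - sfun α S Cs bs 0 z - S z * T 0 z with hfdef
  have hzT : ∀ n, ∀ z : ℂ, (∀ ℓ : Fin L, z ≠ (starRingEnd ℂ) (bs ℓ)) →
      z * T n z = (∑ ℓ : Fin L, (starRingEnd ℂ) (Cs ℓ) * ((starRingEnd ℂ) (bs ℓ)) ^ n)
        + T (n+1) z := by
    intro n z hz
    rw [hTdef]
    simp only
    rw [Finset.mul_sum, ← Finset.sum_add_distrib]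
    apply Finset.sum_congr rfl
    intro ℓ _
    have hzb : z - (starRingEnd ℂ) (bs ℓ) ≠ 0 := sub_ne_zero.2 (hz ℓ)
    field_simp
    ring
  -- the main identity, by induction
  have hmain : ∀ n, ∀ z : ℂ, b * Δ₁ < norm z → norm z < 1 →
      (∀ ℓ : Fin L, z ≠ (starRingEnd ℂ) (bs ℓ)) →
      (PhiP α n).eval z = sfun α S Cs bs n z + S z * T n z + z ^ n * f z := by
    intro n
    induction n with
    | zero =>
      intro z h1 h2 h3
      have : (PhiP α 0).eval z = 1 := by simp [PhiP]
      rw [this, hfdef]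
      simp only
      ring
    | succ n ih =>
      intro z h1 h2 h3
      have heval : (PhiP α (n+1)).eval z
          = z * (PhiP α n).eval z - (starRingEnd ℂ) (α n) * (PhiStarP α n).eval z := by
        rw [PhiP]
        simp [PhiStarP]
      have e1 := hzs n z h1 h2.le
      have e2 := hzT n z h3
      have e3 : Rfun α S Cs bs n z = (starRingEnd ℂ) (α n) * (PhiStarP α n).eval z
          - S z * ∑ ℓ : Fin L, (starRingEnd ℂ) (Cs ℓ) * ((starRingEnd ℂ) (bs ℓ)) ^ n := rfl
      rw [heval, ih z h1 h2 h3]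
      rw [pow_succ]
      linear_combination e1 + S z * e2 + e3

  -- f is analytic on the punctured annulus
  have hfanal : AnalyticOnNhd ℂ f
      {z : ℂ | (b * Δ₁ < norm z ∧ norm z < 1) ∧
        ∀ ℓ : Fin L, z ≠ (starRingEnd ℂ) (bs ℓ)} := by
    intro z hz
    obtain ⟨⟨h1, h2⟩, h3⟩ := hz
    have hs0 : AnalyticAt ℂ (sfun α S Cs bs 0) z := hsanal 0 z ⟨h1, h2⟩
    have hSat : AnalyticAt ℂ S z := hSanal z h2
    have hTan : AnalyticAt ℂ (T 0) z := by
      have : AnalyticAt ℂ (fun w : ℂ => ∑ ℓ : Fin L, (starRingEnd ℂ) (Cs ℓ)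
          * ((starRingEnd ℂ) (bs ℓ)) ^ 0 * (w - (starRingEnd ℂ) (bs ℓ))⁻¹) z := by
        apply Finset.analyticAt_fun_sum
        intro ℓ _
        exact analyticAt_const.mul
          ((analyticAt_id.sub analyticAt_const).inv (sub_ne_zero.2 (h3 ℓ)))
      exact this
    exact (analyticAt_const.sub hs0).sub (hSat.mul hTan)
  -- the boundary formula for f
  have hbΔ₁b : b * Δ₁ < b := by nlinarith
  have hf_formula : ∀ z : ℂ, b < norm z → norm z < 1 →
      f z = (starRingEnd ℂ) (S (((starRingEnd ℂ) z)⁻¹)) := by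
    intro z hbz h2
    have h1 : b * Δ₁ < norm z := lt_trans hbΔ₁b hbz
    have haz0 : 0 < norm z := lt_trans hb0 hbz
    have hz0 : z ≠ 0 := by intro h; rw [h] at haz0; simp at haz0
    have h3 : ∀ ℓ : Fin L, z ≠ (starRingEnd ℂ) (bs ℓ) := by
      intro ℓ h
      rw [h, Complex.norm_conj, habs] at hbz
      exact lt_irrefl _ hbz
    have hw0 : ((starRingEnd ℂ) z)⁻¹ ≠ 0 := by
      simp [hz0]
    have hwabs : norm (((starRingEnd ℂ) z)⁻¹) = (norm z)⁻¹ := by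
      rw [norm_inv, Complex.norm_conj]
    have hwlt : norm (((starRingEnd ℂ) z)⁻¹) < 1 / b := by
      rw [hwabs, one_div]
      exact inv_strictAnti₀ hb0 hbz
    -- identity relating PhiP at z with PhiStarP at 1/conj z
    have hG : ∀ N : ℕ, (starRingEnd ℂ) ((PhiStarP α N).eval (((starRingEnd ℂ) z)⁻¹))
        = (z ^ N)⁻¹ * (PhiP α N).eval z := by
      intro N
      have hdeg : ((PhiP α N).map (starRingEnd ℂ)).natDegree ≤ N := by
        simpa using phiP_natDegree α N
      have h5 : (PhiStarP α N).eval (((starRingEnd ℂ) z)⁻¹)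
          = (((starRingEnd ℂ) z)⁻¹) ^ N * (starRingEnd ℂ) ((PhiP α N).eval z) := by
        rw [PhiStarP, eval_reflect hdeg hw0, inv_inv]
        congr 1
        rw [Polynomial.eval_map, Polynomial.eval₂_at_apply]
      rw [h5, map_mul, map_pow, map_inv₀, Complex.conj_conj, Complex.conj_conj, inv_pow]
    have hGlim : Tendsto (fun N : ℕ => (z ^ N)⁻¹ * (PhiP α N).eval z) atTop
        (nhds ((starRingEnd ℂ) (S (((starRingEnd ℂ) z)⁻¹)))) := by
      have h6 := hS (((starRingEnd ℂ) z)⁻¹) hwlt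
      have h7 := (Complex.continuous_conj.tendsto
        (S (((starRingEnd ℂ) z)⁻¹))).comp h6
      have h8 : (fun N : ℕ => (starRingEnd ℂ) ((PhiStarP α N).eval (((starRingEnd ℂ) z)⁻¹)))
          = fun N : ℕ => (z ^ N)⁻¹ * (PhiP α N).eval z := funext hG
      rw [← h8]
      exact h7
    have hslim : Tendsto (fun N : ℕ => (z ^ N)⁻¹ * sfun α S Cs bs N z) atTop (nhds 0) := by
      have hd3 : norm z - b * Δ₁ ≠ 0 := sub_ne_zero.2 h1.ne'
      refine squeeze_zero_norm (a := fun N : ℕ =>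
        (K * (norm z - b * Δ₁)⁻¹) * ((b * Δ₁) / norm z) ^ N) (fun N => ?_) ?_
      · calc ‖(z ^ N)⁻¹ * sfun α S Cs bs N z‖
            = (norm z ^ N)⁻¹ * norm (sfun α S Cs bs N z) := by
              rw [norm_mul, norm_inv, norm_pow]
          _ ≤ (norm z ^ N)⁻¹ * (K * (b * Δ₁) ^ N * (norm z - b * Δ₁)⁻¹) := by
              refine mul_le_mul le_rfl (hsb N z h1 h2.le) (norm_nonneg _)
                (by positivity)
          _ = (K * (norm z - b * Δ₁)⁻¹) * ((b * Δ₁) / norm z) ^ N := by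
              rw [show K * (b * Δ₁) ^ N * (norm z - b * Δ₁)⁻¹
                  = (K * (norm z - b * Δ₁)⁻¹) * (b * Δ₁) ^ N by ring]
              exact geom_rearrange2 _ _ _ haz0.ne' N
      · have hr0 : 0 ≤ (b * Δ₁) / norm z := by positivity
        have hr1 : (b * Δ₁) / norm z < 1 := (div_lt_one haz0).2 h1
        simpa using (tendsto_pow_atTop_nhds_zero_of_lt_one hr0 hr1).const_mul
          (K * (norm z - b * Δ₁)⁻¹)
    have hTlim : Tendsto (fun N : ℕ => (z ^ N)⁻¹ * (S z * T N z)) atTop (nhds 0) := by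
      have hazb : 0 < norm z - b := by linarith
      have hTb : ∀ N : ℕ, norm (T N z)
          ≤ (∑ ℓ : Fin L, norm (Cs ℓ)) * (norm z - b)⁻¹ * b ^ N := by
        intro N
        rw [hTdef]
        simp only
        refine (norm_sum_le _ _).trans ?_
        rw [show (∑ ℓ : Fin L, norm (Cs ℓ)) * (norm z - b)⁻¹ * b ^ N
            = ∑ ℓ : Fin L, norm (Cs ℓ) * ((norm z - b)⁻¹ * b ^ N) by
          rw [Finset.sum_mul, Finset.sum_mul]
          exact Finset.sum_congr rfl fun ℓ _ => by ring]
        refine Finset.sum_le_sum fun ℓ _ => ?_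
        rw [norm_mul, norm_mul, norm_pow, Complex.norm_conj, Complex.norm_conj, habs, norm_inv]
        have hlow : norm z - b ≤ norm (z - (starRingEnd ℂ) (bs ℓ)) := by
          have := norm_sub_norm_le z ((starRingEnd ℂ) (bs ℓ))
          rw [
            Complex.norm_conj, habs] at this
          exact this
        have hinvle : (norm (z - (starRingEnd ℂ) (bs ℓ)))⁻¹ ≤ (norm z - b)⁻¹ :=
          inv_anti₀ hazb hlow
        calc norm (Cs ℓ) * b ^ N * (norm (z - (starRingEnd ℂ) (bs ℓ)))⁻¹
            ≤ norm (Cs ℓ) * b ^ N * (norm z - b)⁻¹ := by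
              refine mul_le_mul le_rfl hinvle (by positivity) (by positivity)
          _ = norm (Cs ℓ) * ((norm z - b)⁻¹ * b ^ N) := by ring
      refine squeeze_zero_norm (a := fun N : ℕ =>
        (norm (S z) * ((∑ ℓ : Fin L, norm (Cs ℓ)) * (norm z - b)⁻¹))
          * (b / norm z) ^ N) (fun N => ?_) ?_
      · calc ‖(z ^ N)⁻¹ * (S z * T N z)‖
            = (norm z ^ N)⁻¹ * (norm (S z) * norm (T N z)) := by
              rw [norm_mul, norm_inv, norm_pow, norm_mul]
          _ ≤ (norm z ^ N)⁻¹ * ((norm (S z)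
                * ((∑ ℓ : Fin L, norm (Cs ℓ)) * (norm z - b)⁻¹)) * b ^ N) := by
              refine mul_le_mul le_rfl ?_ (by positivity) (by positivity)
              calc norm (S z) * norm (T N z)
                  ≤ norm (S z) * ((∑ ℓ : Fin L, norm (Cs ℓ))
                      * (norm z - b)⁻¹ * b ^ N) := by
                    refine mul_le_mul le_rfl (hTb N) (norm_nonneg _)
                      (norm_nonneg _)
                _ = (norm (S z) * ((∑ ℓ : Fin L, norm (Cs ℓ))
                      * (norm z - b)⁻¹)) * b ^ N := by ring
          _ = (norm (S z) * ((∑ ℓ : Fin L, norm (Cs ℓ))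
                * (norm z - b)⁻¹)) * (b / norm z) ^ N :=
              geom_rearrange2 _ _ _ haz0.ne' N
      · have hr0 : 0 ≤ b / norm z := by positivity
        have hr1 : b / norm z < 1 := (div_lt_one haz0).2 hbz
        simpa using (tendsto_pow_atTop_nhds_zero_of_lt_one hr0 hr1).const_mul
          (norm (S z) * ((∑ ℓ : Fin L, norm (Cs ℓ)) * (norm z - b)⁻¹))
    have hfinal : Tendsto (fun N : ℕ => (z ^ N)⁻¹ * (PhiP α N).eval z) atTop (nhds (f z)) := by
      have heq : (fun N : ℕ => (z ^ N)⁻¹ * (PhiP α N).eval z)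
          = fun N : ℕ => (z ^ N)⁻¹ * sfun α S Cs bs N z
            + (z ^ N)⁻¹ * (S z * T N z) + f z := by
        funext N
        have hzN : (z : ℂ) ^ N ≠ 0 := pow_ne_zero _ hz0
        have hcan : (z ^ N)⁻¹ * (z ^ N * f z) = f z := by
          rw [← mul_assoc, inv_mul_cancel₀ hzN, one_mul]
        rw [hmain N z h1 h2 h3, mul_add, mul_add, hcan]
      rw [heq]
      have h9 : Tendsto (fun _ : ℕ => f z) atTop (nhds (f z)) := tendsto_const_nhds
      have := (hslim.add hTlim).add h9
      simpa using this
    exact tendsto_nhds_unique hfinal hGlim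
  refine ⟨Δ₁, hΔ₁0, hΔ₁1, K, hK0, f, ?_, ?_, ?_, ?_, ?_⟩
  · intro n z h1 h2
    exact hsb n z h1 h2.le
  · exact hsanal
  · exact hfanal
  · exact hf_formula
  · intro n z h1 h2 h3
    exact hmain n z h1 h2 h3
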